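/- Suppose (A1)-(A3) hold, all coordinates of the mean vector M are nonnegative, and set Λ = Λ(M). Then there exists ε_0 > 0 such that for every 0 < ε < ε_0: (i) for every x ∈ ℤ_+^d, E_x(exp(ε|S(τ)|); τ < τ_Λ) < ∞; (ii) for every fixed value of x^Λ ∈ ℤ_+^Λ, E_x(exp(ε|S^Λ(τ)|); τ < τ_Λ) → 0 as min_{i∈Λ^c} x^i → ∞. -/

import Mathlib

open Filter Topology

attribute [local instance] Classical.propDecidable

noncomputable section

variable {V : Type*} [AddCommGroup V]

/-- `n`-step transition kernel of the random walk with step distribution `μ`,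
killed upon leaving the set `A` : `kern μ A n x y = P_x(S n = y, τ_A > n)`,
where `τ_A` is the first exit time from `A`. -/
def kern (μ : V → ℝ) (A : Set V) : ℕ → V → V → ℝ
  | 0 => fun x y => if x = y ∧ x ∈ A then 1 else 0
  | n + 1 => fun x y => ∑' z : V, (if x ∈ A then μ (z - x) else 0) * kern μ A n z y

/-- Green function of the walk killed outside `A`. -/
def green (μ : V → ℝ) (A : Set V) (x y : V) : ℝ :=
  ∑' n : ℕ, kern μ A n x y

/-- `E_x [ g(S τ) ; S τ ∈ B, τ < ∞ ]`, where `τ` is the first exit time from `A`. -/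
def exitExp (μ : V → ℝ) (A B : Set V) (g : V → ℝ) (x : V) : ℝ :=
  ∑' n : ℕ, ∑' z : V, kern μ A n x z *
    ∑' y : V, (if y ∉ A ∧ y ∈ B then μ (y - z) else 0) * g y

/-- `ℝ≥0∞`-valued version of `exitExp`. -/
def exitExpE (μ : V → ℝ) (A B : Set V) (g : V → ℝ) (x : V) : ENNReal :=
  ∑' n : ℕ, ∑' z : V, ENNReal.ofReal (kern μ A n x z) *
    ∑' y : V, ENNReal.ofReal ((if y ∉ A ∧ y ∈ B then μ (y - z) else 0) * g y)

/-- `P_x(S t = y for some t ≥ 0)` for the walk killed outside `A`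
(first passage decomposition). -/
def hitProb (μ : V → ℝ) (A : Set V) (x y : V) : ℝ :=
  (if x = y ∧ x ∈ A then 1 else 0) +
    ∑' n : ℕ, ∑' z : V, kern μ (A \ {y}) n x z * (if y ∈ A then μ (y - z) else 0)

/-- `h` is (strictly speaking, satisfies the mean value property of a) harmonic
function on `A` for the walk with step distribution `μ` killed outside `A`. -/
def HarmOn (μ : V → ℝ) (A : Set V) (h : V → ℝ) : Prop :=
  ∀ x ∈ A, h x = ∑' y : V, if y ∈ A then μ (y - x) * h y else 0

/-- Irreducibility of the walk killed outside `A`. -/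
def Irred (μ : V → ℝ) (A : Set V) : Prop :=
  ∀ x ∈ A, ∀ x' ∈ A, ∃ (k : ℕ) (c : ℕ → V), c 0 = x ∧ c k = x' ∧
    (∀ j ≤ k, c j ∈ A) ∧ ∀ j < k, 0 < μ (c (j + 1) - c j)

/-- A sequence `xs` is fundamental for the walk killed outside `A` :
the Martin kernels `G(x, xs n)/G(x₀, xs n)` converge for every `x ∈ A`. -/
def Fundamental (μ : V → ℝ) (A : Set V) (x₀ : V) (xs : ℕ → V) : Prop :=
  ∀ x ∈ A, ∃ L : ℝ,
    Tendsto (fun n => green μ A x (xs n) / green μ A x₀ (xs n)) atTop (𝓝 L)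

/-- ℓ¹-norm of an integer vector. -/
def znorm {ι : Type*} [Fintype ι] (x : ι → ℤ) : ℝ := ∑ i, |(x i : ℝ)|

/-- ℓ¹-norm of a real vector. -/
def rnorm {ι : Type*} [Fintype ι] (q : ι → ℝ) : ℝ := ∑ i, |q i|

variable {d : ℕ}

/-- `ℤ^{Λ,d}_+ = {x ∈ ℤ^d : xⁱ > 0 for all i ∈ Λ}`. -/
def posDom (Λ : Set (Fin d)) : Set (Fin d → ℤ) := {x | ∀ i ∈ Λ, 0 < x i}

/-- `ℤ^d_+ = {x ∈ ℤ^d : xⁱ > 0 for all i}`. -/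
def posAll : Set (Fin d → ℤ) := {x | ∀ i, 0 < x i}

/-- `a · z` for `a ∈ ℝ^d`, `z ∈ ℤ^d`. -/
def dotZ (a : Fin d → ℝ) (z : Fin d → ℤ) : ℝ := ∑ i, a i * (z i : ℝ)

/-- `a · q` for `a, q ∈ ℝ^d`. -/
def dotR (a q : Fin d → ℝ) : ℝ := ∑ i, a i * q i

/-- jump generating function `φ(a) = Σ_z μ(z) exp(a·z)` (valued in `ℝ≥0∞`). -/
def phiE (μ : (Fin d → ℤ) → ℝ) (a : Fin d → ℝ) : ENNReal :=
  ∑' z : Fin d → ℤ, ENNReal.ofReal (μ z * Real.exp (dotZ a z))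

/-- `D = {a ∈ ℝ^d : φ(a) ≤ 1}`. -/
def Dset (μ : (Fin d → ℤ) → ℝ) : Set (Fin d → ℝ) := {a | phiE μ a ≤ 1}

/-- mean vector `M = Σ_z μ(z) z`. -/
def Mvec (μ : (Fin d → ℤ) → ℝ) : Fin d → ℝ := fun i => ∑' z : Fin d → ℤ, μ z * (z i : ℝ)

/-- `Λ(M) = {i : Mⁱ = 0}`. -/
def LambdaM (μ : (Fin d → ℤ) → ℝ) : Set (Fin d) := {i | Mvec μ i = 0}

/-- Assumption (A1) : irreducibility on every `ℤ^{Λ,d}_+`. -/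
def A1 (μ : (Fin d → ℤ) → ℝ) : Prop := ∀ Λ : Set (Fin d), Irred μ (posDom Λ)

/-- Assumption (A2) : `φ` is finite on a neighborhood of the set `D`. -/
def A2 (μ : (Fin d → ℤ) → ℝ) : Prop :=
  ∃ U : Set (Fin d → ℝ), IsOpen U ∧ Dset μ ⊆ U ∧ ∀ a ∈ U, phiE μ a ≠ ⊤

/-- Assumption (A3) : `M ≠ 0`. -/
def A3 (μ : (Fin d → ℤ) → ℝ) : Prop := Mvec μ ≠ 0

/-- projection `x ↦ x^Λ`. -/
def projL (Λ : Set (Fin d)) (x : Fin d → ℤ) : ↥Λ → ℤ := fun i => x (i : Fin d)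

/-- jump distribution `μ_Λ(v) = Σ_{x : x^Λ = v} μ(x)` of the projected walk. -/
def muL (μ : (Fin d → ℤ) → ℝ) (Λ : Set (Fin d)) (v : ↥Λ → ℤ) : ℝ :=
  ∑' x : Fin d → ℤ, if projL Λ x = v then μ x else 0

/-- `ℤ^Λ_+`. -/
def posL (Λ : Set (Fin d)) : Set (↥Λ → ℤ) := {u | ∀ i, 0 < u i}

end

noncomputable section Aux
open Filter Topology

namespace St16

lemma exp_ge_one_add (x : ℝ) : 1 + x ≤ Real.exp x := by
  have := Real.add_one_le_exp x; linarith

lemma exp_le_quad (s : ℝ) : Real.exp s ≤ 1 + s + s ^ 2 * Real.exp |s| := by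
  rcases le_or_gt 0 s with hs | hs
  · rw [abs_of_nonneg hs]
    rcases le_or_gt 1 s with h1 | h1
    · nlinarith [Real.exp_pos s, mul_nonneg (by nlinarith : (0:ℝ) ≤ s ^ 2 - 1) (Real.exp_pos s).le]
    · have h2 : Real.exp s * (1 - s) ≤ 1 := by
        have hb : (1 : ℝ) - s ≤ Real.exp (-s) := by have := Real.add_one_le_exp (-s); linarith
        have hm : Real.exp s * Real.exp (-s) = 1 := by rw [← Real.exp_add]; simp
        nlinarith [Real.exp_pos s]
      nlinarith [Real.exp_pos s]
  · rw [abs_of_neg hs]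
    set u := -s with hu
    have hu0 : 0 < u := by simp [hu]; linarith
    have hs' : s = -u := by simp [hu]
    rw [hs']
    -- goal : exp (-u) ≤ 1 - u + u^2 exp u
    rcases le_or_gt 1 u with h1 | h1
    · -- u ≥ 1 : u² e^{2u} ≥ e^u(u-1)+1
      have he : Real.exp (-u) ≤ 1 := Real.exp_le_one_iff.mpr (by linarith)
      have h2 : Real.exp u * Real.exp u ≥ Real.exp u * (1 + u) := by
        have := exp_ge_one_add u; nlinarith [Real.exp_pos u]
      have h3 : Real.exp (-u) * Real.exp u = 1 := by rw [← Real.exp_add]; simp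
      nlinarith [Real.exp_pos u, sq_nonneg (u - 1)]
    · -- 0 < u < 1 : e^{-u} ≤ 1/(1+u) ≤ 1-u+u² ≤ RHS
      have hb : Real.exp (-u) * (1 + u) ≤ 1 := by
        have := exp_ge_one_add u
        have hm : Real.exp (-u) * Real.exp u = 1 := by rw [← Real.exp_add]; simp
        nlinarith [Real.exp_pos (-u)]
      have hge : (1 : ℝ) ≤ Real.exp u := by have := exp_ge_one_add u; linarith
      have hcube : (0:ℝ) ≤ u ^ 3 := by positivity
      have hkey : (0:ℝ) ≤ u ^ 2 * (Real.exp u - 1) * (1 + u) :=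
        mul_nonneg (mul_nonneg (sq_nonneg u) (by linarith)) (by linarith)
      nlinarith [Real.exp_pos (-u)]

lemma sq_le_exp {c : ℝ} (hc : 0 < c) (s : ℝ) (hs : 0 ≤ s) :
    s ^ 2 ≤ 4 / c ^ 2 * Real.exp (c * s) := by
  have h : (1 + c * s / 2) ^ 2 ≤ Real.exp (c * s / 2) ^ 2 := by
    have h1 := exp_ge_one_add (c * s / 2)
    have h2 : 0 ≤ 1 + c * s / 2 := by positivity
    nlinarith
  rw [← Real.exp_nat_mul] at h
  have h' : Real.exp ((2 : ℕ) * (c * s / 2)) = Real.exp (c * s) := by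
    congr 1; push_cast; ring
  rw [h'] at h
  have : c ^ 2 * s ^ 2 / 4 ≤ Real.exp (c * s) := by nlinarith
  rw [div_mul_eq_mul_div, le_div_iff₀ (by positivity)]
  nlinarith

lemma abs_le_exp {c : ℝ} (hc : 0 < c) (s : ℝ) : |s| ≤ Real.exp (c * |s|) / c := by
  rw [le_div_iff₀ hc]
  have := exp_ge_one_add (c * |s|)
  nlinarith [abs_nonneg s]

end St16
end Aux
noncomputable section Aux2
open Filter Topology
namespace St16
variable {d : ℕ}

lemma dotZ_smul (t : ℝ) (v : Fin d → ℝ) (z : Fin d → ℤ) :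
    dotZ (fun i => t * v i) z = t * dotZ v z := by
  simp [dotZ, Finset.mul_sum, mul_assoc]

lemma dotZ_add (a : Fin d → ℝ) (u x : Fin d → ℤ) :
    dotZ a (u + x) = dotZ a u + dotZ a x := by
  simp only [dotZ, ← Finset.sum_add_distrib]
  refine Finset.sum_congr rfl fun i _ => ?_
  have : ((u + x) i : ℝ) = (u i : ℝ) + (x i : ℝ) := by push_cast [Pi.add_apply]; ring
  rw [this]; ring

lemma dotZ_neg (a : Fin d → ℝ) (z : Fin d → ℤ) :
    dotZ (fun i => -a i) z = -dotZ a z := by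
  simp [dotZ]

lemma ofReal_tsum_le {ι : Type*} {f : ι → ℝ} (hf : ∀ i, 0 ≤ f i) :
    ENNReal.ofReal (∑' i, f i) ≤ ∑' i, ENNReal.ofReal (f i) := by
  by_cases h : Summable f
  · exact le_of_eq (ENNReal.ofReal_tsum_of_nonneg hf h)
  · rw [tsum_eq_zero_of_not_summable h]; simp

lemma kern_nonneg {V : Type*} [AddCommGroup V] {μ : V → ℝ} (hnn : ∀ z, 0 ≤ μ z)
    (A : Set V) : ∀ n x y, 0 ≤ kern μ A n x y := by
  intro n
  induction n with
  | zero => intro x y; simp only [kern]; split <;> norm_num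
  | succ n ih =>
    intro x y
    simp only [kern]
    refine tsum_nonneg fun z => mul_nonneg ?_ (ih z y)
    split
    · exact hnn _
    · exact le_rfl

/-- shift identity : `∑_y μ(y-z) e^{a·y} = φ(a) e^{a·z}` (in `ℝ≥0∞`). -/
lemma shift_sum {μ : (Fin d → ℤ) → ℝ} (hnn : ∀ z, 0 ≤ μ z) (a : Fin d → ℝ) (z : Fin d → ℤ) :
    ∑' y : Fin d → ℤ, ENNReal.ofReal (μ (y - z) * Real.exp (dotZ a y)) =
      phiE μ a * ENNReal.ofReal (Real.exp (dotZ a z)) := by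
  rw [← Equiv.tsum_eq (Equiv.addRight z) fun y => ENNReal.ofReal (μ (y - z) * Real.exp (dotZ a y))]
  simp only [Equiv.coe_addRight, add_sub_cancel_right]
  rw [phiE, ← ENNReal.tsum_mul_right]
  refine tsum_congr fun u => ?_
  rw [dotZ_add, Real.exp_add, ← mul_assoc,
    ENNReal.ofReal_mul (mul_nonneg (hnn u) (Real.exp_pos _).le)]

/-- Lemma B : exponential supermartingale bound for the killed kernel. -/
lemma kern_exp_bound {μ : (Fin d → ℤ) → ℝ} (hnn : ∀ z, 0 ≤ μ z)
    (A : Set (Fin d → ℤ)) (a : Fin d → ℝ) :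
    ∀ (n : ℕ) (x : Fin d → ℤ),
      ∑' z : Fin d → ℤ, ENNReal.ofReal (kern μ A n x z) * ENNReal.ofReal (Real.exp (dotZ a z))
        ≤ (phiE μ a) ^ n * ENNReal.ofReal (Real.exp (dotZ a x)) := by
  intro n
  induction n with
  | zero =>
    intro x
    rw [tsum_eq_single x]
    · simp only [kern, pow_zero, one_mul]
      split
      · simp
      · simp
    · intro z hz
      simp only [kern]
      rw [if_neg, ENNReal.ofReal_zero, zero_mul]
      rintro ⟨rfl, -⟩; exact hz rfl
  | succ n ih =>
    intro x
    have hker : ∀ z, ENNReal.ofReal (kern μ A (n + 1) x z) ≤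
        ∑' w : Fin d → ℤ, ENNReal.ofReal ((if x ∈ A then μ (w - x) else 0) * kern μ A n w z) := by
      intro z
      simp only [kern]
      exact ofReal_tsum_le fun w => mul_nonneg (by split; exacts [hnn _, le_rfl])
        (kern_nonneg hnn A n w z)
    calc ∑' z, ENNReal.ofReal (kern μ A (n+1) x z) * ENNReal.ofReal (Real.exp (dotZ a z))
        ≤ ∑' z, (∑' w, ENNReal.ofReal ((if x ∈ A then μ (w - x) else 0) * kern μ A n w z)) *
            ENNReal.ofReal (Real.exp (dotZ a z)) :=
          ENNReal.tsum_le_tsum fun z => mul_le_mul_left (hker z) _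
      _ = ∑' w, ∑' z, ENNReal.ofReal (if x ∈ A then μ (w - x) else 0) *
            (ENNReal.ofReal (kern μ A n w z) * ENNReal.ofReal (Real.exp (dotZ a z))) := by
          have h1 : ∀ z : Fin d → ℤ,
              (∑' w, ENNReal.ofReal ((if x ∈ A then μ (w - x) else 0) * kern μ A n w z)) *
                ENNReal.ofReal (Real.exp (dotZ a z)) =
              ∑' w, ENNReal.ofReal (if x ∈ A then μ (w - x) else 0) *
                (ENNReal.ofReal (kern μ A n w z) * ENNReal.ofReal (Real.exp (dotZ a z))) := by
            intro z
            rw [← ENNReal.tsum_mul_right]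
            refine tsum_congr fun w => ?_
            rw [ENNReal.ofReal_mul (by split; exacts [hnn _, le_rfl])]
            ring
          exact (tsum_congr h1).trans ENNReal.tsum_comm
      _ = ∑' w, ENNReal.ofReal (if x ∈ A then μ (w - x) else 0) *
            ∑' z, ENNReal.ofReal (kern μ A n w z) * ENNReal.ofReal (Real.exp (dotZ a z)) := by
          exact tsum_congr fun w => ENNReal.tsum_mul_left
      _ ≤ ∑' w, ENNReal.ofReal (μ (w - x)) * ((phiE μ a) ^ n * ENNReal.ofReal (Real.exp (dotZ a w))) := by
          refine ENNReal.tsum_le_tsum fun w => ?_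
          refine mul_le_mul' (ENNReal.ofReal_le_ofReal ?_) (ih w)
          split; exacts [le_rfl, hnn _]
      _ = (phiE μ a) ^ n * ∑' w, ENNReal.ofReal (μ (w - x) * Real.exp (dotZ a w)) := by
          rw [← ENNReal.tsum_mul_left]
          refine tsum_congr fun w => ?_
          rw [ENNReal.ofReal_mul (hnn _)]; ring
      _ = (phiE μ a) ^ (n + 1) * ENNReal.ofReal (Real.exp (dotZ a x)) := by
          rw [shift_sum hnn a x, pow_succ]; ring
/-- Lemma C : master bound for `exitExpE` via a finite family of exponentials. -/
lemma exitExpE_le {μ : (Fin d → ℤ) → ℝ} (hnn : ∀ z, 0 ≤ μ z)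
    (A B : Set (Fin d → ℤ)) (g : (Fin d → ℤ) → ℝ)
    {ι : Type*} (F : Finset ι) (a : ι → Fin d → ℝ)
    (hphi : ∀ k ∈ F, phiE μ (a k) ≤ 1)
    (hg : ∀ y, y ∉ A → y ∈ B →
      ENNReal.ofReal (g y) ≤ ∑ k ∈ F, ENNReal.ofReal (Real.exp (dotZ (a k) y)))
    (x : Fin d → ℤ) :
    exitExpE μ A B g x ≤
      ∑ k ∈ F, (1 - phiE μ (a k))⁻¹ * ENNReal.ofReal (Real.exp (dotZ (a k) x)) := by
  have hinner : ∀ z : Fin d → ℤ,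
      (∑' y : Fin d → ℤ, ENNReal.ofReal ((if y ∉ A ∧ y ∈ B then μ (y - z) else 0) * g y)) ≤
      ∑ k ∈ F, phiE μ (a k) * ENNReal.ofReal (Real.exp (dotZ (a k) z)) := by
    intro z
    have hy : ∀ y : Fin d → ℤ,
        ENNReal.ofReal ((if y ∉ A ∧ y ∈ B then μ (y - z) else 0) * g y) ≤
        ∑ k ∈ F, ENNReal.ofReal (μ (y - z) * Real.exp (dotZ (a k) y)) := by
      intro y
      by_cases hP : y ∉ A ∧ y ∈ B
      · rw [if_pos hP, ENNReal.ofReal_mul (hnn _)]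
        calc ENNReal.ofReal (μ (y - z)) * ENNReal.ofReal (g y)
            ≤ ENNReal.ofReal (μ (y - z)) *
                ∑ k ∈ F, ENNReal.ofReal (Real.exp (dotZ (a k) y)) :=
              mul_le_mul_right (hg y hP.1 hP.2) _
          _ = ∑ k ∈ F, ENNReal.ofReal (μ (y - z) * Real.exp (dotZ (a k) y)) := by
              rw [Finset.mul_sum]
              exact Finset.sum_congr rfl fun k _ => (ENNReal.ofReal_mul (hnn _)).symm
      · rw [if_neg hP, zero_mul, ENNReal.ofReal_zero]
        exact zero_le
    calc (∑' y : Fin d → ℤ, ENNReal.ofReal ((if y ∉ A ∧ y ∈ B then μ (y - z) else 0) * g y))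
        ≤ ∑' y : Fin d → ℤ, ∑ k ∈ F, ENNReal.ofReal (μ (y - z) * Real.exp (dotZ (a k) y)) :=
          ENNReal.tsum_le_tsum hy
      _ = ∑ k ∈ F, ∑' y : Fin d → ℤ, ENNReal.ofReal (μ (y - z) * Real.exp (dotZ (a k) y)) :=
          Summable.tsum_finsetSum fun k _ => ENNReal.summable
      _ = ∑ k ∈ F, phiE μ (a k) * ENNReal.ofReal (Real.exp (dotZ (a k) z)) :=
          Finset.sum_congr rfl fun k _ => shift_sum hnn (a k) z
  calc exitExpE μ A B g x
      ≤ ∑' n : ℕ, ∑' z : Fin d → ℤ, ENNReal.ofReal (kern μ A n x z) *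
          ∑ k ∈ F, phiE μ (a k) * ENNReal.ofReal (Real.exp (dotZ (a k) z)) := by
        refine ENNReal.tsum_le_tsum fun n => ENNReal.tsum_le_tsum fun z =>
          mul_le_mul_right (hinner z) _
    _ = ∑ k ∈ F, ∑' n : ℕ, ∑' z : Fin d → ℤ, ENNReal.ofReal (kern μ A n x z) *
          (phiE μ (a k) * ENNReal.ofReal (Real.exp (dotZ (a k) z))) := by
        rw [← Summable.tsum_finsetSum fun k _ => ENNReal.summable]
        refine tsum_congr fun n => ?_
        rw [← Summable.tsum_finsetSum fun k _ => ENNReal.summable]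
        exact tsum_congr fun z => Finset.mul_sum _ _ _
    _ = ∑ k ∈ F, ∑' n : ℕ, phiE μ (a k) * ∑' z : Fin d → ℤ,
          ENNReal.ofReal (kern μ A n x z) * ENNReal.ofReal (Real.exp (dotZ (a k) z)) := by
        refine Finset.sum_congr rfl fun k _ => tsum_congr fun n => ?_
        rw [← ENNReal.tsum_mul_left]
        exact tsum_congr fun z => by ring
    _ ≤ ∑ k ∈ F, ∑' n : ℕ, phiE μ (a k) *
          ((phiE μ (a k)) ^ n * ENNReal.ofReal (Real.exp (dotZ (a k) x))) := by
        refine Finset.sum_le_sum fun k _ => ENNReal.tsum_le_tsum fun n =>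
          mul_le_mul_right (kern_exp_bound hnn A (a k) n x) _
    _ ≤ ∑ k ∈ F, (1 - phiE μ (a k))⁻¹ * ENNReal.ofReal (Real.exp (dotZ (a k) x)) := by
        refine Finset.sum_le_sum fun k hk => ?_
        rw [ENNReal.tsum_mul_left, ENNReal.tsum_mul_right, ENNReal.tsum_geometric]
        calc phiE μ (a k) * ((1 - phiE μ (a k))⁻¹ * ENNReal.ofReal (Real.exp (dotZ (a k) x)))
            ≤ 1 * ((1 - phiE μ (a k))⁻¹ * ENNReal.ofReal (Real.exp (dotZ (a k) x))) :=
              mul_le_mul_left (hphi k hk) _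
          _ = _ := one_mul _
lemma phiE_zero_le {μ : (Fin d → ℤ) → ℝ} (hnn : ∀ z, 0 ≤ μ z) (hsum : HasSum μ 1) :
    phiE μ (0 : Fin d → ℝ) ≤ 1 := by
  have h : ∀ z : Fin d → ℤ, μ z * Real.exp (dotZ (0 : Fin d → ℝ) z) = μ z := by
    intro z; simp [dotZ]
  rw [phiE]
  calc (∑' z : Fin d → ℤ, ENNReal.ofReal (μ z * Real.exp (dotZ (0 : Fin d → ℝ) z)))
      = ∑' z : Fin d → ℤ, ENNReal.ofReal (μ z) := tsum_congr fun z => by rw [h z]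
    _ = ENNReal.ofReal (∑' z, μ z) := (ENNReal.ofReal_tsum_of_nonneg hnn hsum.summable).symm
    _ ≤ 1 := by rw [hsum.tsum_eq]; simp

lemma exists_ball {μ : (Fin d → ℤ) → ℝ} (hnn : ∀ z, 0 ≤ μ z) (hsum : HasSum μ 1)
    (hA2 : A2 μ) : ∃ δ : ℝ, 0 < δ ∧ ∀ a : Fin d → ℝ, (∀ i, |a i| ≤ δ) → phiE μ a ≠ ⊤ := by
  obtain ⟨U, hUo, hDU, hUfin⟩ := hA2
  have h0U : (0 : Fin d → ℝ) ∈ U := hDU (phiE_zero_le hnn hsum)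
  obtain ⟨r, hr, hball⟩ := Metric.isOpen_iff.mp hUo 0 h0U
  refine ⟨r / 2, by linarith, fun a ha => hUfin a (hball ?_)⟩
  rw [Metric.mem_ball, dist_pi_lt_iff hr]
  intro i
  have : dist (a i) 0 = |a i| := by rw [Real.dist_eq, sub_zero]
  rw [Pi.zero_apply, this]
  calc |a i| ≤ r / 2 := ha i
    _ < r := by linarith

lemma summable_of_phiE_ne_top {μ : (Fin d → ℤ) → ℝ} (hnn : ∀ z, 0 ≤ μ z)
    {a : Fin d → ℝ} (h : phiE μ a ≠ ⊤) :
    Summable (fun z : Fin d → ℤ => μ z * Real.exp (dotZ a z)) := by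
  have h2 := ENNReal.summable_toReal h
  exact h2.congr fun z => ENNReal.toReal_ofReal (mul_nonneg (hnn z) (Real.exp_pos _).le)

lemma summable_exp_abs {μ : (Fin d → ℤ) → ℝ} (hnn : ∀ z, 0 ≤ μ z) {c : ℝ} (hc : 0 < c)
    {v : Fin d → ℝ}
    (h1 : Summable (fun z : Fin d → ℤ => μ z * Real.exp (c * dotZ v z)))
    (h2 : Summable (fun z : Fin d → ℤ => μ z * Real.exp (-(c * dotZ v z)))) :
    Summable (fun z : Fin d → ℤ => μ z * Real.exp (c * |dotZ v z|)) := by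
  refine Summable.of_nonneg_of_le
    (fun z => mul_nonneg (hnn z) (Real.exp_pos _).le) (fun z => ?_) (h1.add h2)
  rcases abs_cases (dotZ v z) with ⟨he, -⟩ | ⟨he, -⟩ <;> rw [he] <;>
    [skip; rw [show c * -dotZ v z = -(c * dotZ v z) by ring]] <;>
  · have := (Real.exp_pos (c * dotZ v z)).le
    have := (Real.exp_pos (-(c * dotZ v z))).le
    nlinarith [hnn z]

lemma summable_coord {μ : (Fin d → ℤ) → ℝ} (hnn : ∀ z, 0 ≤ μ z)
    {δ : ℝ} (hδ : 0 < δ) (hfin : ∀ a : Fin d → ℝ, (∀ i, |a i| ≤ δ) → phiE μ a ≠ ⊤)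
    (i : Fin d) : Summable (fun z : Fin d → ℤ => μ z * (z i : ℝ)) := by
  set a : Fin d → ℝ := fun l => if l = i then δ else 0 with ha
  have hdz : ∀ z : Fin d → ℤ, dotZ a z = δ * (z i : ℝ) := by
    intro z; simp [dotZ, ha, ite_mul, Finset.sum_ite_eq']
  have haδ : ∀ l, |a l| ≤ δ := by
    intro l; simp only [ha]; split <;> simp [abs_of_pos hδ, hδ.le]
  have hmδ : ∀ l, |(-a) l| ≤ δ := by
    intro l; simp only [Pi.neg_apply, abs_neg]; exact haδ l
  have h1 := summable_of_phiE_ne_top hnn (hfin a haδ)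
  have h2 := summable_of_phiE_ne_top hnn (hfin (-a) hmδ)
  have h2' : Summable (fun z : Fin d → ℤ => μ z * Real.exp (-(δ * (z i : ℝ)))) := by
    refine h2.congr fun z => ?_
    have : dotZ (-a) z = -dotZ a z := by
      exact dotZ_neg a z
    rw [this, hdz]
  have h1' : Summable (fun z : Fin d → ℤ => μ z * Real.exp (δ * (z i : ℝ))) := by
    refine h1.congr fun z => ?_; rw [hdz]
  have habs : Summable (fun z : Fin d → ℤ => μ z * Real.exp (δ * |(z i : ℝ)|)) := by
    have hv1 : Summable (fun z : Fin d → ℤ => μ z * Real.exp (δ * dotZ (fun l => if l = i then 1 else 0) z)) := by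
      refine h1'.congr fun z => ?_
      congr 2
      simp [dotZ, ite_mul, Finset.sum_ite_eq']
    have hv2 : Summable (fun z : Fin d → ℤ => μ z * Real.exp (-(δ * dotZ (fun l => if l = i then 1 else 0) z))) := by
      refine h2'.congr fun z => ?_
      congr 2
      simp [dotZ, ite_mul, Finset.sum_ite_eq']
    have := summable_exp_abs hnn hδ hv1 hv2
    refine this.congr fun z => ?_
    congr 2
    simp [dotZ, ite_mul, Finset.sum_ite_eq']
  refine Summable.of_abs ?_
  refine Summable.of_nonneg_of_le (fun z => abs_nonneg _) (fun z => ?_)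
    (habs.mul_right δ⁻¹)
  rw [abs_mul, abs_of_nonneg (hnn z)]
  calc μ z * |(z i : ℝ)| ≤ μ z * (Real.exp (δ * |(z i : ℝ)|) / δ) :=
        mul_le_mul_of_nonneg_left (abs_le_exp hδ _) (hnn z)
    _ = μ z * Real.exp (δ * |(z i : ℝ)|) * δ⁻¹ := by ring

lemma mean_exchange {μ : (Fin d → ℤ) → ℝ} (hnn : ∀ z, 0 ≤ μ z)
    {δ : ℝ} (hδ : 0 < δ) (hfin : ∀ a : Fin d → ℝ, (∀ i, |a i| ≤ δ) → phiE μ a ≠ ⊤)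
    (v : Fin d → ℝ) :
    Summable (fun z : Fin d → ℤ => μ z * dotZ v z) ∧
      ∑' z : Fin d → ℤ, μ z * dotZ v z = dotR v (Mvec μ) := by
  have hre : ∀ z : Fin d → ℤ, μ z * dotZ v z = ∑ i, v i * (μ z * (z i : ℝ)) := by
    intro z
    rw [dotZ, Finset.mul_sum]
    exact Finset.sum_congr rfl fun i _ => by ring
  have hsm : ∀ i : Fin d, Summable (fun z : Fin d → ℤ => v i * (μ z * (z i : ℝ))) :=
    fun i => (summable_coord hnn hδ hfin i).mul_left (v i)
  constructor
  · have hS : Summable (fun z : Fin d → ℤ => ∑ i, v i * (μ z * (z i : ℝ))) :=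
      summable_sum fun i _ => hsm i
    exact hS.congr fun z => (hre z).symm
  · calc ∑' z : Fin d → ℤ, μ z * dotZ v z
        = ∑' z : Fin d → ℤ, ∑ i, v i * (μ z * (z i : ℝ)) := tsum_congr hre
      _ = ∑ i, ∑' z : Fin d → ℤ, v i * (μ z * (z i : ℝ)) := Summable.tsum_finsetSum fun i _ => hsm i
      _ = ∑ i, v i * ∑' z : Fin d → ℤ, μ z * (z i : ℝ) :=
          Finset.sum_congr rfl fun i _ => tsum_mul_left
      _ = dotR v (Mvec μ) := rfl
/-- Claim A : if `v · M < 0` then `φ(ε v) < 1` for all small `ε > 0`. -/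
lemma claimA {μ : (Fin d → ℤ) → ℝ} (hnn : ∀ z, 0 ≤ μ z) (hsum : HasSum μ 1) (hA2 : A2 μ)
    (v : Fin d → ℝ) (hv : dotR v (Mvec μ) < 0) :
    ∃ t₁ : ℝ, 0 < t₁ ∧ ∀ ε : ℝ, 0 < ε → ε ≤ t₁ → phiE μ (fun i => ε * v i) < 1 := by
  obtain ⟨δ, hδ, hfin⟩ := exists_ball hnn hsum hA2
  set Bv : ℝ := 1 + ∑ i, |v i| with hBv
  have hBv0 : 0 < Bv := by
    have : (0 : ℝ) ≤ ∑ i, |v i| := Finset.sum_nonneg fun i _ => abs_nonneg _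
    linarith
  set c : ℝ := δ / Bv with hc
  have hc0 : 0 < c := div_pos hδ hBv0
  have hvB : ∀ i, |v i| ≤ Bv := by
    intro i
    have h1 : |v i| ≤ ∑ i, |v i| :=
      Finset.single_le_sum (fun i _ => abs_nonneg (v i)) (Finset.mem_univ i)
    linarith
  have hcv : ∀ i, |c * v i| ≤ δ := by
    intro i
    rw [abs_mul, abs_of_pos hc0]
    calc c * |v i| ≤ c * Bv := mul_le_mul_of_nonneg_left (hvB i) hc0.le
      _ = δ := by rw [hc, div_mul_cancel₀ δ hBv0.ne']
  have h1 : Summable (fun z : Fin d → ℤ => μ z * Real.exp (c * dotZ v z)) := by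
    have := summable_of_phiE_ne_top hnn (hfin (fun i => c * v i) hcv)
    exact this.congr fun z => by rw [dotZ_smul]
  have h2 : Summable (fun z : Fin d → ℤ => μ z * Real.exp (-(c * dotZ v z))) := by
    have hcv' : ∀ i, |(-c) * v i| ≤ δ := fun i => by
      rw [show (-c) * v i = -(c * v i) by ring, abs_neg]; exact hcv i
    have := summable_of_phiE_ne_top hnn (hfin (fun i => (-c) * v i) hcv')
    exact this.congr fun z => by rw [dotZ_smul]; ring_nf
  have habs : Summable (fun z : Fin d → ℤ => μ z * Real.exp (c * |dotZ v z|)) :=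
    summable_exp_abs hnn hc0 h1 h2
  obtain ⟨hq, htq⟩ := mean_exchange hnn hδ hfin v
  set m : ℝ := dotR v (Mvec μ) with hm
  set C : ℝ := ∑' z : Fin d → ℤ, μ z * Real.exp (c * |dotZ v z|) with hC
  have hC0 : 0 ≤ C :=
    tsum_nonneg fun z => mul_nonneg (hnn z) (Real.exp_pos _).le
  set Cc : ℝ := 4 / (c / 2) ^ 2 with hCc
  have hCc0 : 0 < Cc := by positivity
  refine ⟨min (c / 2) ((-m) / (2 * Cc * C + 1)), ?_, ?_⟩
  · refine lt_min (by linarith) ?_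
    have : 0 < -m := by linarith
    positivity
  intro ε hε0 hε1
  have hεc : ε ≤ c / 2 := hε1.trans (min_le_left _ _)
  have hεm : ε ≤ (-m) / (2 * Cc * C + 1) := hε1.trans (min_le_right _ _)
  -- pointwise bound
  have hpt : ∀ z : Fin d → ℤ, μ z * Real.exp (ε * dotZ v z) ≤
      μ z + ε * (μ z * dotZ v z) + (ε ^ 2 * Cc) * (μ z * Real.exp (c * |dotZ v z|)) := by
    intro z
    set q : ℝ := dotZ v z with hqz
    have hquad := exp_le_quad (ε * q)
    have habs' : |ε * q| = ε * |q| := by rw [abs_mul, abs_of_pos hε0]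
    have hsq : q ^ 2 ≤ Cc * Real.exp ((c / 2) * |q|) := by
      have := sq_le_exp (c := c / 2) (by linarith) |q| (abs_nonneg q)
      calc q ^ 2 = |q| ^ 2 := (sq_abs q).symm
        _ ≤ 4 / (c / 2) ^ 2 * Real.exp (c / 2 * |q|) := this
        _ = Cc * Real.exp ((c / 2) * |q|) := by rw [hCc]
    have hee : Real.exp (ε * |q|) ≤ Real.exp ((c / 2) * |q|) :=
      Real.exp_le_exp.mpr (mul_le_mul_of_nonneg_right hεc (abs_nonneg q))
    have hmulexp : Real.exp ((c / 2) * |q|) * Real.exp ((c / 2) * |q|) =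
        Real.exp (c * |q|) := by
      rw [← Real.exp_add]; congr 1; ring
    have hkey : (ε * q) ^ 2 * Real.exp |ε * q| ≤ ε ^ 2 * Cc * Real.exp (c * |q|) := by
      rw [habs']
      have e1 : (ε * q) ^ 2 * Real.exp (ε * |q|) = ε ^ 2 * (q ^ 2 * Real.exp (ε * |q|)) := by
        ring
      rw [e1]
      have e2 : q ^ 2 * Real.exp (ε * |q|) ≤ Cc * Real.exp (c * |q|) := by
        calc q ^ 2 * Real.exp (ε * |q|) ≤ (Cc * Real.exp ((c / 2) * |q|)) * Real.exp ((c / 2) * |q|) := by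
              have h3 : 0 ≤ q ^ 2 := sq_nonneg q
              have h4 := (Real.exp_pos (ε * |q|)).le
              have h5 := (Real.exp_pos ((c / 2) * |q|)).le
              nlinarith [Real.exp_pos ((c/2) * |q|), Real.exp_pos (ε * |q|)]
          _ = Cc * Real.exp (c * |q|) := by rw [mul_assoc, hmulexp]
      calc ε ^ 2 * (q ^ 2 * Real.exp (ε * |q|)) ≤ ε ^ 2 * (Cc * Real.exp (c * |q|)) :=
            mul_le_mul_of_nonneg_left e2 (sq_nonneg ε)
        _ = ε ^ 2 * Cc * Real.exp (c * |q|) := by ring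
    have := hnn z
    calc μ z * Real.exp (ε * q)
        ≤ μ z * (1 + ε * q + (ε * q) ^ 2 * Real.exp |ε * q|) :=
          mul_le_mul_of_nonneg_left hquad (hnn z)
      _ ≤ μ z * (1 + ε * q + ε ^ 2 * Cc * Real.exp (c * |q|)) :=
          mul_le_mul_of_nonneg_left (by linarith) (hnn z)
      _ = μ z + ε * (μ z * q) + (ε ^ 2 * Cc) * (μ z * Real.exp (c * |q|)) := by ring
  have hgsum : Summable (fun z : Fin d → ℤ =>
      μ z + ε * (μ z * dotZ v z) + (ε ^ 2 * Cc) * (μ z * Real.exp (c * |dotZ v z|))) :=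
    ((hsum.summable.add (hq.mul_left ε)).add (habs.mul_left (ε ^ 2 * Cc)))
  have hfsum : Summable (fun z : Fin d → ℤ => μ z * Real.exp (ε * dotZ v z)) :=
    Summable.of_nonneg_of_le (fun z => mul_nonneg (hnn z) (Real.exp_pos _).le) hpt hgsum
  have htle : (∑' z : Fin d → ℤ, μ z * Real.exp (ε * dotZ v z)) ≤ 1 + ε * m + ε ^ 2 * Cc * C := by
    calc (∑' z : Fin d → ℤ, μ z * Real.exp (ε * dotZ v z))
        ≤ ∑' z : Fin d → ℤ, (μ z + ε * (μ z * dotZ v z) +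
            (ε ^ 2 * Cc) * (μ z * Real.exp (c * |dotZ v z|))) :=
          Summable.tsum_le_tsum hpt hfsum hgsum
      _ = (∑' z : Fin d → ℤ, μ z) + ε * (∑' z : Fin d → ℤ, μ z * dotZ v z) +
            (ε ^ 2 * Cc) * C := by
          rw [Summable.tsum_add (hsum.summable.add (hq.mul_left ε)) (habs.mul_left (ε ^ 2 * Cc)),
            Summable.tsum_add hsum.summable (hq.mul_left ε), tsum_mul_left, tsum_mul_left, hC]
      _ = 1 + ε * m + ε ^ 2 * Cc * C := by
          rw [hsum.tsum_eq, htq]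
  have hlt1 : (∑' z : Fin d → ℤ, μ z * Real.exp (ε * dotZ v z)) < 1 := by
    have hb : ε ^ 2 * Cc * C ≤ ε * (-m) / 2 := by
      have h6 : ε * (2 * Cc * C + 1) ≤ -m := by
        have hX : (0:ℝ) < 2 * Cc * C + 1 := by positivity
        exact (le_div_iff₀ hX).mp hεm
      nlinarith [mul_pos hε0 hε0, hε0, hCc0, hC0]
    have : ε * m < 0 := mul_neg_of_pos_of_neg hε0 (by linarith)
    linarith
  have hphi : phiE μ (fun i => ε * v i) =
      ENNReal.ofReal (∑' z : Fin d → ℤ, μ z * Real.exp (ε * dotZ v z)) := by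
    rw [phiE, ENNReal.ofReal_tsum_of_nonneg
      (fun z => mul_nonneg (hnn z) (Real.exp_pos _).le) hfsum]
    exact tsum_congr fun z => by rw [dotZ_smul]
  rw [hphi]
  exact ENNReal.ofReal_lt_one.mpr hlt1
end St16
end Aux2

open St16

theorem statement16 {d : ℕ} (μ : (Fin d → ℤ) → ℝ)
    (hnn : ∀ z, 0 ≤ μ z) (hsum : HasSum μ 1)
    (hA1 : A1 μ) (hA2 : A2 μ) (hA3 : A3 μ)
    (hM : ∀ i, 0 ≤ Mvec μ i) :
    ∃ ε₀ : ℝ, 0 < ε₀ ∧ ∀ ε : ℝ, 0 < ε → ε < ε₀ →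
      -- (i) `E_x(exp(ε|S(τ)|); τ < τ_Λ) < ∞`
      (∀ x ∈ posAll,
        exitExpE μ posAll (posDom (LambdaM μ)) (fun y => Real.exp (ε * znorm y)) x ≠ ⊤) ∧
      -- (ii) `E_x(exp(ε|S^Λ(τ)|); τ < τ_Λ) → 0` as `min_{i ∈ Λᶜ} xⁱ → ∞`, `x^Λ` fixed
      (∀ u ∈ posL (LambdaM μ), ∀ η : ℝ, 0 < η → ∃ K : ℤ, ∀ x : Fin d → ℤ,
        projL (LambdaM μ) x = u → (∀ i : Fin d, i ∉ LambdaM μ → K ≤ x i) →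
        exitExpE μ posAll (posDom (LambdaM μ))
            (fun y => Real.exp (ε * znorm (projL (LambdaM μ) y))) x
          < ENNReal.ofReal η) := by
  rcases Nat.eq_zero_or_pos d with hd | hd
  · exfalso
    apply hA3
    funext i
    exact absurd i.2 (by omega)
  have hnotin : ∀ i : Fin d, i ∉ LambdaM μ → 0 < Mvec μ i := by
    intro i hi
    have : Mvec μ i ≠ 0 := by simpa [LambdaM] using hi
    exact (hM i).lt_of_ne' this
  set SM : ℝ := ∑ i, Mvec μ i with hSM
  have hMle : ∀ j, Mvec μ j ≤ SM :=
    fun j => Finset.single_le_sum (fun i _ => hM i) (Finset.mem_univ j)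
  have hSM0 : 0 ≤ SM := Finset.sum_nonneg fun i _ => hM i
  set R : Fin d → ℝ := fun j => (1 + SM) / Mvec μ j with hRdef
  have hR1 : ∀ j, j ∉ LambdaM μ → 1 ≤ R j := by
    intro j hj
    rw [hRdef, le_div_iff₀ (hnotin j hj)]
    have := hMle j; linarith
  have hRM : ∀ j, j ∉ LambdaM μ → R j * Mvec μ j = 1 + SM := by
    intro j hj
    rw [hRdef, div_mul_cancel₀]
    exact (hnotin j hj).ne'
  -- generic negativity of the drift in the directions we use
  have hdot : ∀ j, j ∉ LambdaM μ → ∀ vv : Fin d → ℝ, (∀ i, i ≠ j → vv i ≤ 1) →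
      vv j = -R j → dotR vv (Mvec μ) < 0 := by
    intro j hj vv hle hj'
    have hterm : ∀ i : Fin d, vv i * Mvec μ i ≤
        (if i = j then -R j * Mvec μ j else Mvec μ i) := by
      intro i
      by_cases hij : i = j
      · subst hij; rw [if_pos rfl, hj']
      · rw [if_neg hij]
        calc vv i * Mvec μ i ≤ 1 * Mvec μ i :=
              mul_le_mul_of_nonneg_right (hle i hij) (hM i)
          _ = Mvec μ i := one_mul _
    have hsum2 : ∑ i, (if i = j then -R j * Mvec μ j else Mvec μ i) = -1 - Mvec μ j := by
      have : ∀ i : Fin d, (if i = j then -R j * Mvec μ j else Mvec μ i) =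
          Mvec μ i + (if i = j then -R j * Mvec μ j - Mvec μ j else 0) := by
        intro i; by_cases hij : i = j
        · subst hij; simp
        · simp [hij]
      rw [Finset.sum_congr rfl fun i _ => this i, Finset.sum_add_distrib,
        Finset.sum_ite_eq' Finset.univ j]
      simp only [Finset.mem_univ, if_true]
      rw [← hSM]
      linear_combination -(hRM j hj)
    calc dotR vv (Mvec μ) = ∑ i, vv i * Mvec μ i := rfl
      _ ≤ ∑ i, (if i = j then -R j * Mvec μ j else Mvec μ i) := Finset.sum_le_sum fun i _ => hterm i
      _ = -1 - Mvec μ j := hsum2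
      _ < 0 := by have := (hnotin j hj); linarith
  -- the two families of directions
  set w : Fin d → (Fin d → ℝ) :=
    fun j i => if i ∈ LambdaM μ then 1 else if i = j then -R j else 0 with hw
  set vσ : Fin d → (Fin d → Bool) → (Fin d → ℝ) :=
    fun j σ i => if i ∈ LambdaM μ then 1 else if i = j then -R j else
      (if σ i then 1 else -1) with hvσ
  have hdotw : ∀ j, j ∉ LambdaM μ → dotR (w j) (Mvec μ) < 0 := by
    intro j hj
    refine hdot j hj (w j) (fun i hij => ?_) (by simp [hw, hj])
    have hRj := hR1 j hj
    by_cases h1 : i ∈ LambdaM μ <;> simp [hw, h1, hij] <;> norm_num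
  have hdotv : ∀ j, j ∉ LambdaM μ → ∀ σ, dotR (vσ j σ) (Mvec μ) < 0 := by
    intro j hj σ
    refine hdot j hj (vσ j σ) (fun i hij => ?_) (by simp [hvσ, hj])
    have hRj := hR1 j hj
    by_cases h1 : i ∈ LambdaM μ <;> by_cases h2 : σ i <;>
      simp [hvσ, h1, h2, hij] <;> norm_num
  -- thresholds
  set T : (Fin d → ℝ) → ℝ := fun uu =>
    if h : ∃ t₁ : ℝ, 0 < t₁ ∧ ∀ ε : ℝ, 0 < ε → ε ≤ t₁ →
        phiE μ (fun i => ε * uu i) < 1 then h.choose else 1 with hT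
  have hT0 : ∀ uu, 0 < T uu := by
    intro uu
    by_cases h : ∃ t₁ : ℝ, 0 < t₁ ∧ ∀ ε : ℝ, 0 < ε → ε ≤ t₁ →
        phiE μ (fun i => ε * uu i) < 1
    · simp only [hT]
      rw [dif_pos h]
      exact h.choose_spec.1
    · simp only [hT]
      rw [dif_neg h]
      exact one_pos
  have hTlt : ∀ uu : Fin d → ℝ, dotR uu (Mvec μ) < 0 → ∀ ε : ℝ, 0 < ε → ε ≤ T uu →
      phiE μ (fun i => ε * uu i) < 1 := by
    intro uu huu ε h1 h2
    have h : ∃ t₁ : ℝ, 0 < t₁ ∧ ∀ ε : ℝ, 0 < ε → ε ≤ t₁ →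
        phiE μ (fun i => ε * uu i) < 1 := claimA hnn hsum hA2 uu huu
    simp only [hT] at h2
    rw [dif_pos h] at h2
    exact h.choose_spec.2 ε h1 h2
  have hne : Nonempty (Fin d) := ⟨⟨0, hd⟩⟩
  have hιne : (Finset.univ : Finset (Fin d × (Fin d → Bool))).Nonempty := Finset.univ_nonempty
  refine ⟨Finset.univ.inf' hιne (fun p => min (T (vσ p.1 p.2)) (T (w p.1))), ?_, ?_⟩
  · exact (Finset.lt_inf'_iff _).mpr fun p _ => lt_min (hT0 _) (hT0 _)
  intro ε hε hεlt
  have hεT : ∀ p : Fin d × (Fin d → Bool), ε ≤ min (T (vσ p.1 p.2)) (T (w p.1)) :=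
    fun p => le_of_lt (lt_of_lt_of_le hεlt (Finset.inf'_le _ (Finset.mem_univ p)))
  have hφv : ∀ j, j ∉ LambdaM μ → ∀ σ, phiE μ (fun i => ε * vσ j σ i) < 1 := by
    intro j hj σ
    exact hTlt _ (hdotv j hj σ) ε hε ((hεT (j, σ)).trans (min_le_left _ _))
  have hφw : ∀ j, j ∉ LambdaM μ → phiE μ (fun i => ε * w j i) < 1 := by
    intro j hj
    have hσ : Fin d → Bool := fun _ => true
    exact hTlt _ (hdotw j hj) ε hε ((hεT (j, fun _ => true)).trans (min_le_right _ _))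
  constructor
  · -- part (i)
    intro x hx
    set F : Finset (Fin d × (Fin d → Bool)) :=
      Finset.univ.filter (fun p => p.1 ∉ LambdaM μ) with hF
    set a : (Fin d × (Fin d → Bool)) → (Fin d → ℝ) :=
      fun p => fun i => ε * vσ p.1 p.2 i with ha
    have hφ : ∀ p ∈ F, phiE μ (a p) ≤ 1 := by
      intro p hp
      have hp' : p.1 ∉ LambdaM μ := by
        have := (Finset.mem_filter.mp hp).2
        simpa using this
      exact (hφv p.1 hp' p.2).le
    have hg : ∀ y : Fin d → ℤ, y ∉ posAll → y ∈ posDom (LambdaM μ) →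
        ENNReal.ofReal (Real.exp (ε * znorm y)) ≤
          ∑ p ∈ F, ENNReal.ofReal (Real.exp (dotZ (a p) y)) := by
      intro y hyA hyB
      have hex : ∃ j : Fin d, ¬ 0 < y j := by
        by_contra hcon
        push_neg at hcon
        exact hyA fun i => hcon i
      obtain ⟨j, hyj'⟩ := hex
      have hyj : y j ≤ 0 := not_lt.mp hyj'
      have hjΛ : j ∉ LambdaM μ := fun hjin => hyj' (hyB j hjin)
      set σ : Fin d → Bool := fun i => decide (0 ≤ y i) with hσ
      have hterm : ∀ i : Fin d, |(y i : ℝ)| ≤ vσ j σ i * (y i : ℝ) := by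
        intro i
        by_cases h1 : i ∈ LambdaM μ
        · have hyi : (0 : ℝ) < (y i : ℝ) := by exact_mod_cast hyB i h1
          simp only [hvσ, if_pos h1, one_mul]
          exact le_of_eq (abs_of_pos hyi)
        · by_cases h2 : i = j
          · subst h2
            have hyi : (y i : ℝ) ≤ 0 := by exact_mod_cast hyj
            have hRj := hR1 i hjΛ
            have hval : vσ i σ i = -R i := by simp [hvσ, h1]
            rw [hval, abs_of_nonpos hyi]
            nlinarith
          · by_cases h3 : 0 ≤ y i
            · have hyi : (0 : ℝ) ≤ (y i : ℝ) := by exact_mod_cast h3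
              have hval : vσ j σ i = 1 := by simp [hvσ, h1, h2, hσ, h3]
              rw [hval, one_mul]
              exact le_of_eq (abs_of_nonneg hyi)
            · have hyi : (y i : ℝ) ≤ 0 := by
                have h4 : y i ≤ 0 := by omega
                exact_mod_cast h4
              have hval : vσ j σ i = -1 := by simp [hvσ, h1, h2, hσ, h3]
              rw [hval, abs_of_nonpos hyi]
              linarith
      have hzn : ε * znorm y ≤ dotZ (a (j, σ)) y := by
        have h4 : znorm y ≤ dotZ (vσ j σ) y := by
          rw [znorm, dotZ]
          exact Finset.sum_le_sum fun i _ => hterm i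
        have h5 : dotZ (a (j, σ)) y = ε * dotZ (vσ j σ) y := by
          simp only [ha]
          exact dotZ_smul ε _ y
        rw [h5]
        exact mul_le_mul_of_nonneg_left h4 hε.le
      calc ENNReal.ofReal (Real.exp (ε * znorm y))
          ≤ ENNReal.ofReal (Real.exp (dotZ (a (j, σ)) y)) :=
            ENNReal.ofReal_le_ofReal (Real.exp_le_exp.mpr hzn)
        _ ≤ ∑ p ∈ F, ENNReal.ofReal (Real.exp (dotZ (a p) y)) :=
            Finset.single_le_sum
              (f := fun p => ENNReal.ofReal (Real.exp (dotZ (a p) y)))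
              (fun p _ => zero_le)
              (Finset.mem_filter.mpr ⟨Finset.mem_univ _, hjΛ⟩)
    have happ := exitExpE_le hnn posAll (posDom (LambdaM μ))
      (fun y => Real.exp (ε * znorm y)) F a hφ hg x
    refine ne_top_of_le_ne_top ?_ happ
    rw [ENNReal.sum_ne_top]
    intro p hp
    have hp' : p.1 ∉ LambdaM μ := by
      have := (Finset.mem_filter.mp hp).2
      simpa using this
    have hφp : phiE μ (a p) < 1 := hφv p.1 hp' p.2
    have h1 : (1 : ENNReal) - phiE μ (a p) ≠ 0 := by
      rw [ne_eq, tsub_eq_zero_iff_le]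
      exact hφp.not_ge
    exact ENNReal.mul_ne_top (ENNReal.inv_ne_top.mpr h1) ENNReal.ofReal_ne_top
  · -- part (ii)
    intro u hu η hη
    set F2 : Finset (Fin d) := Finset.univ.filter (fun j => j ∉ LambdaM μ) with hF2
    set aw : Fin d → (Fin d → ℝ) := fun j i => ε * w j i with haw
    have hmemF2 : ∀ j ∈ F2, j ∉ LambdaM μ := by
      intro j hj
      have := (Finset.mem_filter.mp hj).2
      simpa using this
    have hφ2 : ∀ j ∈ F2, phiE μ (aw j) ≤ 1 := fun j hj => (hφw j (hmemF2 j hj)).le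
    have hsub : ∀ f : Fin d → ℝ,
        (∑ i ∈ Finset.univ.filter (fun i => i ∈ LambdaM μ), f i) =
          ∑ i : ↥(LambdaM μ), f i := by
      intro f
      exact Finset.sum_subtype _ (fun x => by simp) f
    have hdec : ∀ j, j ∉ LambdaM μ → ∀ y : Fin d → ℤ,
        dotZ (w j) y =
          (∑ i ∈ Finset.univ.filter (fun i => i ∈ LambdaM μ), (y i : ℝ)) +
            (-R j) * (y j : ℝ) := by
      intro j hj y
      rw [dotZ]
      have hterm : ∀ i : Fin d, w j i * (y i : ℝ) =
          (if i ∈ LambdaM μ then (y i : ℝ) else 0) +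
            (if i = j then (-R j) * (y i : ℝ) else 0) := by
        intro i
        by_cases h1 : i ∈ LambdaM μ
        · have h2 : i ≠ j := fun h => hj (h ▸ h1)
          simp [hw, h1, h2]
        · by_cases h2 : i = j
          · subst h2; simp [hw, h1]
          · simp [hw, h1, h2]
      rw [Finset.sum_congr rfl fun i _ => hterm i, Finset.sum_add_distrib]
      congr 1
      · exact (Finset.sum_filter _ _).symm
      · rw [Finset.sum_ite_eq' Finset.univ j (fun i => (-R j) * (y i : ℝ))]
        simp
    have hg2 : ∀ y : Fin d → ℤ, y ∉ posAll → y ∈ posDom (LambdaM μ) →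
        ENNReal.ofReal (Real.exp (ε * znorm (projL (LambdaM μ) y))) ≤
          ∑ j ∈ F2, ENNReal.ofReal (Real.exp (dotZ (aw j) y)) := by
      intro y hyA hyB
      have hex : ∃ j : Fin d, ¬ 0 < y j := by
        by_contra hcon
        push_neg at hcon
        exact hyA fun i => hcon i
      obtain ⟨j, hyj'⟩ := hex
      have hyj : (y j : ℝ) ≤ 0 := by exact_mod_cast not_lt.mp hyj'
      have hjΛ : j ∉ LambdaM μ := fun hjin => hyj' (hyB j hjin)
      have hzval : znorm (projL (LambdaM μ) y) =
          ∑ i ∈ Finset.univ.filter (fun i => i ∈ LambdaM μ), (y i : ℝ) := by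
        have h1 : znorm (projL (LambdaM μ) y) = ∑ i : ↥(LambdaM μ), |(y (i : Fin d) : ℝ)| := by
          rw [znorm]
          exact Finset.sum_congr rfl fun i _ => by rw [projL]
        rw [h1, ← hsub (fun i => |(y i : ℝ)|)]
        refine Finset.sum_congr rfl fun i hi => ?_
        have hiΛ : i ∈ LambdaM μ := by
          have := (Finset.mem_filter.mp hi).2
          simpa using this
        have : (0 : ℝ) < (y i : ℝ) := by exact_mod_cast hyB i hiΛ
        exact abs_of_pos this
      have hkey : ε * znorm (projL (LambdaM μ) y) ≤ dotZ (aw j) y := by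
        have h1 : dotZ (aw j) y = ε * dotZ (w j) y := by
          rw [haw]; exact dotZ_smul ε _ y
        have h2 : znorm (projL (LambdaM μ) y) ≤ dotZ (w j) y := by
          rw [hzval, hdec j hjΛ y]
          have hRj := hR1 j hjΛ
          nlinarith
        rw [h1]
        exact mul_le_mul_of_nonneg_left h2 hε.le
      calc ENNReal.ofReal (Real.exp (ε * znorm (projL (LambdaM μ) y)))
          ≤ ENNReal.ofReal (Real.exp (dotZ (aw j) y)) :=
            ENNReal.ofReal_le_ofReal (Real.exp_le_exp.mpr hkey)
        _ ≤ ∑ j ∈ F2, ENNReal.ofReal (Real.exp (dotZ (aw j) y)) :=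
            Finset.single_le_sum
              (f := fun j => ENNReal.ofReal (Real.exp (dotZ (aw j) y)))
              (fun j _ => zero_le)
              (Finset.mem_filter.mpr ⟨Finset.mem_univ _, hjΛ⟩)
    set Tt : ENNReal := ∑ j ∈ F2, (1 - phiE μ (aw j))⁻¹ with hTtdef
    have hTtne : Tt ≠ ⊤ := by
      rw [hTtdef, ENNReal.sum_ne_top]
      intro j hj
      have hφj : phiE μ (aw j) < 1 := hφw j (hmemF2 j hj)
      refine ENNReal.inv_ne_top.mpr ?_
      rw [ne_eq, tsub_eq_zero_iff_le]
      exact hφj.not_ge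
    set r : ℝ := Tt.toReal with hrdef
    have hr0 : 0 ≤ r := ENNReal.toReal_nonneg
    set su : ℝ := ∑ i : ↥(LambdaM μ), ((u i : ℤ) : ℝ) with hsu
    obtain ⟨N, hN⟩ := exists_nat_gt ((r * Real.exp (ε * su) + 1) / (η * ε))
    refine ⟨(N : ℤ), ?_⟩
    intro x hproj hxK
    have happ := exitExpE_le hnn posAll (posDom (LambdaM μ))
      (fun y => Real.exp (ε * znorm (projL (LambdaM μ) y))) F2 aw hφ2 hg2 x
    have hsux : (∑ i ∈ Finset.univ.filter (fun i => i ∈ LambdaM μ), (x i : ℝ)) = su := by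
      rw [hsub (fun i => (x i : ℝ)), hsu]
      refine Finset.sum_congr rfl fun i _ => ?_
      have : x (i : Fin d) = u i := by rw [← hproj]; rfl
      rw [this]
    have hbound : ∀ j ∈ F2, ENNReal.ofReal (Real.exp (dotZ (aw j) x)) ≤
        ENNReal.ofReal (Real.exp (ε * su - ε * N)) := by
      intro j hj
      have hjΛ := hmemF2 j hj
      have h1 : dotZ (aw j) x = ε * (su + (-R j) * (x j : ℝ)) := by
        rw [haw, dotZ_smul ε _ x, hdec j hjΛ x, hsux]
      have hxj : (N : ℝ) ≤ (x j : ℝ) := by exact_mod_cast hxK j hjΛ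
      have hRj := hR1 j hjΛ
      have hN0 : (0 : ℝ) ≤ (N : ℝ) := Nat.cast_nonneg N
      have hxj0 : (0 : ℝ) ≤ (x j : ℝ) := le_trans hN0 hxj
      refine ENNReal.ofReal_le_ofReal (Real.exp_le_exp.mpr ?_)
      rw [h1]
      have h2 : su + (-R j) * (x j : ℝ) ≤ su - N := by nlinarith
      calc ε * (su + (-R j) * (x j : ℝ)) ≤ ε * (su - N) :=
            mul_le_mul_of_nonneg_left h2 hε.le
        _ = ε * su - ε * N := by ring
    calc exitExpE μ posAll (posDom (LambdaM μ))
          (fun y => Real.exp (ε * znorm (projL (LambdaM μ) y))) x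
        ≤ ∑ j ∈ F2, (1 - phiE μ (aw j))⁻¹ * ENNReal.ofReal (Real.exp (dotZ (aw j) x)) := happ
      _ ≤ ∑ j ∈ F2, (1 - phiE μ (aw j))⁻¹ * ENNReal.ofReal (Real.exp (ε * su - ε * N)) :=
          Finset.sum_le_sum fun j hj => mul_le_mul_right (hbound j hj) _
      _ = Tt * ENNReal.ofReal (Real.exp (ε * su - ε * N)) := by
          rw [hTtdef, Finset.sum_mul]
      _ = ENNReal.ofReal (r * Real.exp (ε * su - ε * N)) := by
          rw [← ENNReal.ofReal_toReal hTtne, ← hrdef, ← ENNReal.ofReal_mul hr0]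
      _ < ENNReal.ofReal η := by
          rw [ENNReal.ofReal_lt_ofReal_iff hη]
          have hgexp : Real.exp (ε * su - ε * N) =
              Real.exp (ε * su) * Real.exp (-(ε * N)) := by
            rw [← Real.exp_add]; ring_nf
          have hb : Real.exp (-(ε * N)) * (1 + ε * N) ≤ 1 := by
            have h3 := exp_ge_one_add (ε * N)
            have h4 : Real.exp (-(ε * N)) * Real.exp (ε * N) = 1 := by
              rw [← Real.exp_add]; simp
            nlinarith [Real.exp_pos (-(ε * N))]
          have hNineq : r * Real.exp (ε * su) + 1 < η * ε * N := by
            rw [div_lt_iff₀ (by positivity)] at hN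
            linarith
          have hE1 := Real.exp_pos (ε * su)
          have hE2 := Real.exp_pos (-(ε * N))
          have hN0 : (0 : ℝ) ≤ (N : ℝ) := Nat.cast_nonneg N
          rw [hgexp]
          nlinarith [mul_le_mul_of_nonneg_left hb (mul_nonneg hr0 hE1.le),
            mul_pos hη hε, mul_nonneg (mul_nonneg hη.le hε.le) hN0]
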